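/- Let dim(·|·) be a bivariant Sylvester module rank function for a unital ring R such that for every exact sequence 0 → M₁ → M₂ → M₃ → 0 of R-modules with M₂ and M₃ finitely presented one has dim(M₂) = dim(M₁) + dim(M₃). Then dim(M₁|M₂) = dim(M₁) for all R-modules M₁ ⊆ M₂, and consequently dim(·) is a normalized length function for R. -/

import Mathlib

universe u
open scoped NNReal ENNReal

/-- A bivariant Sylvester module rank function for a unital ring `R`: to each pair of left
`R`-modules `N ⊆ M` (encoded as a submodule `N` of a module `M`) it assigns a value
`d M N ∈ ℝ≥0∞`, thought of as `dim(N|M)`, satisfying isomorphism invariance, normalization,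
direct sum additivity, the two continuity conditions, and additivity. -/
structure BivariantSylvesterRank (R : Type u) [Ring R] where
  d : ∀ (M : Type u) [AddCommGroup M] [Module R M], Submodule R M → ℝ≥0∞
  iso_invariant : ∀ (M N : Type u) [AddCommGroup M] [Module R M] [AddCommGroup N] [Module R N]
      (e : M ≃ₗ[R] N) (p : Submodule R M),
      d M p = d N (p.map (e : M →ₗ[R] N))
  d_zero : d PUnit ⊤ = 0
  d_ring : d R ⊤ = 1
  d_prod : ∀ (M N : Type u) [AddCommGroup M] [Module R M] [AddCommGroup N] [Module R N]
      (p : Submodule R M) (q : Submodule R N),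
      d (M × N) (p.prod q) = d M p + d N q
  continuity_sup : ∀ (M : Type u) [AddCommGroup M] [Module R M] (p : Submodule R M),
      d M p = ⨆ (p' : {p' : Submodule R M // p'.FG ∧ p' ≤ p}), d M p'.1
  continuity_inf : ∀ (M : Type u) [AddCommGroup M] [Module R M] (p : Submodule R M), p.FG →
      d M p = ⨅ (q : {q : Submodule R M // q.FG ∧ p ≤ q}), d q.1 (p.comap q.1.subtype)
  additivity : ∀ (M : Type u) [AddCommGroup M] [Module R M] (p : Submodule R M),
      d M ⊤ = d M p + d (M ⧸ p) ⊤

/-- A normalized length function for a unital ring `R`: an `ℝ≥0∞`-valued function on all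
left `R`-modules with `L(0)=0`, `L(R)=1`, continuity (sup over finitely generated
submodules) and additivity on short exact sequences. -/
def IsNormalizedLengthFunction (R : Type u) [Ring R]
    (L : ∀ (M : Type u) [AddCommGroup M] [Module R M], ℝ≥0∞) : Prop :=
  L PUnit = 0 ∧ L R = 1 ∧
    (∀ (M : Type u) [AddCommGroup M] [Module R M],
      L M = ⨆ (p : {p : Submodule R M // p.FG}), L ↥p.1) ∧
    (∀ (M₁ M₂ M₃ : Type u) [AddCommGroup M₁] [Module R M₁] [AddCommGroup M₂] [Module R M₂]
      [AddCommGroup M₃] [Module R M₃] (f : M₁ →ₗ[R] M₂) (g : M₂ →ₗ[R] M₃),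
      Function.Injective f → Function.Exact f g → Function.Surjective g →
      L M₂ = L M₁ + L M₃)

namespace BivariantSylvesterRankAux

variable {R : Type u} [Ring R] (dim : BivariantSylvesterRank R)

lemma d_top_congr (M N : Type u) [AddCommGroup M] [Module R M] [AddCommGroup N] [Module R N]
    (e : M ≃ₗ[R] N) : dim.d M ⊤ = dim.d N ⊤ := by
  rw [dim.iso_invariant M N e ⊤, Submodule.map_top, LinearEquiv.range]

lemma d_mono (M : Type u) [AddCommGroup M] [Module R M] {p q : Submodule R M} (hpq : p ≤ q) :
    dim.d M p ≤ dim.d M q := by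
  rw [dim.continuity_sup M p, dim.continuity_sup M q]
  exact iSup_le fun p' => le_iSup_of_le ⟨p'.1, p'.2.1, p'.2.2.trans hpq⟩ le_rfl

lemma d_le_d_top (M : Type u) [AddCommGroup M] [Module R M] (p : Submodule R M) :
    dim.d M p ≤ dim.d M ⊤ := by
  rw [dim.additivity M p]; exact le_self_add

/-- A subsingleton module is linearly equivalent to `PUnit`. -/
def subsingletonEquivPUnit (M : Type u) [AddCommGroup M] [Module R M] [Subsingleton M] :
    M ≃ₗ[R] PUnit.{u+1} where
  toFun _ := PUnit.unit
  invFun _ := 0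
  map_add' _ _ := rfl
  map_smul' _ _ := rfl
  left_inv _ := Subsingleton.elim _ _
  right_inv _ := rfl

/-- `Fin (n+1) → R` splits. -/
def piSuccEquiv (n : ℕ) : (Fin (n + 1) → R) ≃ₗ[R] R × (Fin n → R) where
  toFun f := (f 0, fun i => f i.succ)
  invFun p := Fin.cons p.1 p.2
  map_add' _ _ := rfl
  map_smul' _ _ := rfl
  left_inv f := Fin.cons_self_tail f
  right_inv p := by ext <;> simp

lemma d_pi (n : ℕ) : dim.d (Fin n → R) ⊤ = n := by
  induction n with
  | zero => rw [d_top_congr dim _ _ (subsingletonEquivPUnit (Fin 0 → R)), dim.d_zero,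
      Nat.cast_zero]
  | succ n ih =>
    have htop : ((⊤ : Submodule R R).prod (⊤ : Submodule R (Fin n → R))) = ⊤ := by ext; simp
    rw [d_top_congr dim _ _ (piSuccEquiv n), ← htop, dim.d_prod, dim.d_ring, ih]
    push_cast; ring

lemma d_top_ne_top (M : Type u) [AddCommGroup M] [Module R M] [Module.Finite R M] :
    dim.d M ⊤ ≠ ⊤ := by
  obtain ⟨n, f, hf⟩ := Module.Finite.exists_fin' R M
  have h1 : dim.d M ⊤ ≤ (n : ℝ≥0∞) := by
    calc dim.d M ⊤ = dim.d ((Fin n → R) ⧸ LinearMap.ker f) ⊤ :=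
          (d_top_congr dim _ _ (f.quotKerEquivOfSurjective hf)).symm
      _ ≤ dim.d (Fin n → R) ⊤ := by
          rw [dim.additivity (Fin n → R) (LinearMap.ker f)]; exact le_add_self
      _ = n := d_pi dim n
  exact ne_top_of_le_ne_top (ENNReal.natCast_ne_top n) h1

lemma d_ne_top (M : Type u) [AddCommGroup M] [Module R M] [Module.Finite R M]
    (p : Submodule R M) : dim.d M p ≠ ⊤ :=
  ne_top_of_le_ne_top (d_top_ne_top dim M) (d_le_d_top dim M p)


variable {R : Type u} [Ring R] (dim : BivariantSylvesterRank R)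
variable (h : ∀ (M₁ M₂ M₃ : Type u) [AddCommGroup M₁] [Module R M₁] [AddCommGroup M₂]
      [Module R M₂] [AddCommGroup M₃] [Module R M₃]
      (f : M₁ →ₗ[R] M₂) (g : M₂ →ₗ[R] M₃),
      Module.FinitePresentation R M₂ → Module.FinitePresentation R M₃ →
      Function.Injective f → Function.Exact f g → Function.Surjective g →
      dim.d M₂ ⊤ = dim.d M₁ ⊤ + dim.d M₃ ⊤)
include h

lemma d_eq_of_fp (M : Type u) [AddCommGroup M] [Module R M] [Module.FinitePresentation R M]
    (N : Submodule R M) (hN : N.FG) : dim.d M N = dim.d ↥N ⊤ := by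
  have hfp3 : Module.FinitePresentation R (M ⧸ N) :=
    Module.finitePresentation_of_surjective N.mkQ (Submodule.mkQ_surjective N)
      (by rwa [Submodule.ker_mkQ])
  have hexact : Function.Exact N.subtype N.mkQ :=
    LinearMap.exact_iff.mpr (by rw [Submodule.ker_mkQ, Submodule.range_subtype])
  have h1 := h ↥N M (M ⧸ N) N.subtype N.mkQ inferInstance hfp3 N.injective_subtype
      hexact (Submodule.mkQ_surjective N)
  have h2 := dim.additivity M N
  rw [h1] at h2
  exact (WithTop.add_right_cancel (d_top_ne_top dim (M ⧸ N)) h2).symm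

lemma d_eq_of_finite (M : Type u) [AddCommGroup M] [Module R M] [Module.Finite R M]
    (N : Submodule R M) (hN : N.FG) : dim.d M N = dim.d ↥N ⊤ := by
  obtain ⟨n, π, hπ⟩ := Module.Finite.exists_fin' R M
  set K := LinearMap.ker π with hK
  set N₀ := N.comap π with hN₀
  have hKN₀ : K ≤ N₀ := Submodule.comap_mono bot_le
  have eq2 : dim.d (Fin n → R) ⊤ = dim.d (Fin n → R) K + dim.d M ⊤ := by
    rw [dim.additivity (Fin n → R) K,
      d_top_congr dim ((Fin n → R) ⧸ K) M (π.quotKerEquivOfSurjective hπ)]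
  have eqq : dim.d ((Fin n → R) ⧸ N₀) ⊤ = dim.d (M ⧸ N) ⊤ := by
    have hsur : Function.Surjective (N.mkQ ∘ₗ π) := (Submodule.mkQ_surjective N).comp hπ
    have hker : LinearMap.ker (N.mkQ ∘ₗ π) = N₀ := by
      rw [LinearMap.ker_comp, Submodule.ker_mkQ]
    rw [← hker]
    exact d_top_congr dim _ _ ((N.mkQ ∘ₗ π).quotKerEquivOfSurjective hsur)
  have hqne : dim.d (M ⧸ N) ⊤ ≠ ⊤ := d_top_ne_top dim (M ⧸ N)
  have hstar : dim.d (Fin n → R) N₀ = dim.d (Fin n → R) K + dim.d M N := by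
    have t1 : dim.d (Fin n → R) ⊤ = dim.d (Fin n → R) N₀ + dim.d (M ⧸ N) ⊤ := by
      rw [dim.additivity (Fin n → R) N₀, eqq]
    have t2 : dim.d (Fin n → R) ⊤
        = dim.d (Fin n → R) K + dim.d M N + dim.d (M ⧸ N) ⊤ := by
      rw [eq2, dim.additivity M N, add_assoc]
    exact WithTop.add_right_cancel hqne (t1.symm.trans t2)
  obtain ⟨s, hs⟩ := id hN
  choose σ hσ using hπ
  set p' := Submodule.span R (σ '' (s : Set M)) with hp'
  have hp'fg : p'.FG := Submodule.fg_span (Set.Finite.image σ s.finite_toSet)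
  have hmap : p'.map π = N := by
    rw [hp', Submodule.map_span, Set.image_image]
    simp only [hσ, Set.image_id']
    exact hs
  have hp'le : p' ≤ N₀ := by
    rw [hN₀, ← hmap]; exact Submodule.le_comap_map π p'
  have key : ∀ k : Submodule R (Fin n → R), k.FG → k ≤ K →
      dim.d (Fin n → R) k + dim.d ↥N ⊤ ≤ dim.d (Fin n → R) N₀ := by
    intro k hkfg hkK
    set p'' := p' ⊔ k with hp''
    have hp''fg : p''.FG := hp'fg.sup hkfg
    have hp''le : p'' ≤ N₀ := sup_le hp'le (hkK.trans hKN₀)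
    have hmem : ∀ x : ↥p'', π ↑x ∈ N := fun x => hp''le x.2
    set ρ : ↥p'' →ₗ[R] ↥N := (π ∘ₗ p''.subtype).codRestrict N (fun x => hmem x) with hρ
    have hρsurj : Function.Surjective ρ := by
      rintro ⟨y, hy⟩
      rw [← hmap] at hy
      obtain ⟨x, hx, hxy⟩ := Submodule.mem_map.mp hy
      exact ⟨⟨x, (le_sup_left : p' ≤ p'') hx⟩, Subtype.ext hxy⟩
    have hadd : dim.d ↥p'' ⊤ = dim.d ↥p'' (LinearMap.ker ρ) + dim.d ↥N ⊤ := by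
      rw [dim.additivity ↥p'' (LinearMap.ker ρ),
        d_top_congr dim _ _ (ρ.quotKerEquivOfSurjective hρsurj)]
    have hA : dim.d (Fin n → R) p'' = dim.d ↥p'' ⊤ := d_eq_of_fp dim h (Fin n → R) p'' hp''fg
    have hC : dim.d (Fin n → R) k ≤ dim.d ↥p'' (k.comap p''.subtype) := by
      rw [dim.continuity_inf (Fin n → R) k hkfg]
      exact iInf_le _ (⟨p'', hp''fg, le_sup_right⟩ : {q : Submodule R (Fin n → R) // q.FG ∧ k ≤ q})
    have hker2 : k.comap p''.subtype ≤ LinearMap.ker ρ := by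
      intro x hx
      have hx0 : π ↑x = 0 := hkK hx
      rw [LinearMap.mem_ker]
      exact Subtype.ext hx0
    calc dim.d (Fin n → R) k + dim.d ↥N ⊤
        ≤ dim.d ↥p'' (LinearMap.ker ρ) + dim.d ↥N ⊤ :=
          add_le_add_left (hC.trans (d_mono dim ↥p'' hker2)) _
      _ = dim.d ↥p'' ⊤ := hadd.symm
      _ = dim.d (Fin n → R) p'' := hA.symm
      _ ≤ dim.d (Fin n → R) N₀ := d_mono dim (Fin n → R) hp''le
  have hKge : dim.d (Fin n → R) K + dim.d ↥N ⊤ ≤ dim.d (Fin n → R) N₀ := by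
    rw [dim.continuity_sup (Fin n → R) K]
    haveI : Nonempty {q : Submodule R (Fin n → R) // q.FG ∧ q ≤ K} :=
      ⟨⟨⊥, Submodule.fg_bot, bot_le⟩⟩
    rw [ENNReal.iSup_add]
    exact iSup_le fun k => key k.1 k.2.1 k.2.2
  rw [hstar] at hKge
  have hKne : dim.d (Fin n → R) K ≠ ⊤ := d_ne_top dim (Fin n → R) K
  have hge : dim.d ↥N ⊤ ≤ dim.d M N := (ENNReal.add_le_add_iff_left hKne).mp hKge
  refine le_antisymm ?_ hge
  rw [dim.continuity_inf M N hN]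
  refine (iInf_le _ (⟨N, hN, le_rfl⟩ : {q : Submodule R M // q.FG ∧ N ≤ q})).trans ?_
  rw [Submodule.comap_subtype_self]

lemma d_eq_of_fg (M : Type u) [AddCommGroup M] [Module R M]
    (N : Submodule R M) (hN : N.FG) : dim.d M N = dim.d ↥N ⊤ := by
  rw [dim.continuity_inf M N hN]
  haveI hne : Nonempty {q : Submodule R M // q.FG ∧ N ≤ q} := ⟨⟨N, hN, le_rfl⟩⟩
  have hconst : ∀ q : {q : Submodule R M // q.FG ∧ N ≤ q},
      dim.d ↥q.1 (N.comap q.1.subtype) = dim.d ↥N ⊤ := by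
    rintro ⟨q, hq, hNq⟩
    show dim.d ↥q (N.comap q.subtype) = dim.d ↥N ⊤
    haveI : Module.Finite R ↥q := Module.Finite.iff_fg.mpr hq
    haveI hNfin : Module.Finite R ↥N := Module.Finite.iff_fg.mpr hN
    haveI hcfin : Module.Finite R ↥(N.comap q.subtype) :=
      Module.Finite.equiv (Submodule.comapSubtypeEquivOfLe hNq).symm
    have hcfg : (N.comap q.subtype).FG := Module.Finite.iff_fg.mp hcfin
    rw [d_eq_of_finite dim h ↥q (N.comap q.subtype) hcfg]
    exact d_top_congr dim _ _ (Submodule.comapSubtypeEquivOfLe hNq)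
  rw [iInf_congr hconst, iInf_const]

lemma d_eq (M : Type u) [AddCommGroup M] [Module R M] (N : Submodule R M) :
    dim.d M N = dim.d ↥N ⊤ := by
  apply le_antisymm
  · rw [dim.continuity_sup M N]
    refine iSup_le ?_
    rintro ⟨p, hp, hpN⟩
    show dim.d M p ≤ dim.d ↥N ⊤
    rw [d_eq_of_fg dim h M p hp]
    have hfg : (p.comap N.subtype).FG := by
      haveI : Module.Finite R ↥p := Module.Finite.iff_fg.mpr hp
      exact Module.Finite.iff_fg.mp
        (Module.Finite.equiv (Submodule.comapSubtypeEquivOfLe hpN).symm)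
    calc dim.d ↥p ⊤ = dim.d ↥(p.comap N.subtype) ⊤ :=
          d_top_congr dim _ _ (Submodule.comapSubtypeEquivOfLe hpN).symm
      _ = dim.d ↥N (p.comap N.subtype) := (d_eq_of_fg dim h ↥N _ hfg).symm
      _ ≤ dim.d ↥N ⊤ := d_le_d_top dim ↥N _
  · rw [dim.continuity_sup ↥N ⊤]
    refine iSup_le ?_
    rintro ⟨p', hp', -⟩
    show dim.d ↥N p' ≤ dim.d M N
    have hmfg : (p'.map N.subtype).FG := hp'.map _
    have hmle : p'.map N.subtype ≤ N := by
      rintro x hx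
      obtain ⟨y, -, rfl⟩ := Submodule.mem_map.mp hx
      exact y.2
    calc dim.d ↥N p' = dim.d ↥p' ⊤ := d_eq_of_fg dim h ↥N p' hp'
      _ = dim.d ↥(p'.map N.subtype) ⊤ :=
          d_top_congr dim _ _ (Submodule.equivMapOfInjective N.subtype N.injective_subtype p')
      _ = dim.d M (p'.map N.subtype) := (d_eq_of_fg dim h M _ hmfg).symm
      _ ≤ dim.d M N := d_mono dim M hmle

end BivariantSylvesterRankAux

/-- Let `dim(·|·)` be a bivariant Sylvester module rank function for `R`
such that for every short exact sequence `0 → M₁ → M₂ → M₃ → 0` with `M₂`, `M₃` finitely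
presented one has `dim(M₂) = dim(M₁) + dim(M₃)`. Then `dim(N|M) = dim(N)` for all modules
`N ⊆ M`, and consequently `M ↦ dim(M)` is a normalized length function for `R`. -/
theorem bivariantSylvesterRank_isLengthFunction_of_additive_on_fp (R : Type u) [Ring R]
    (dim : BivariantSylvesterRank R)
    (h : ∀ (M₁ M₂ M₃ : Type u) [AddCommGroup M₁] [Module R M₁] [AddCommGroup M₂]
      [Module R M₂] [AddCommGroup M₃] [Module R M₃]
      (f : M₁ →ₗ[R] M₂) (g : M₂ →ₗ[R] M₃),
      Module.FinitePresentation R M₂ → Module.FinitePresentation R M₃ →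
      Function.Injective f → Function.Exact f g → Function.Surjective g →
      dim.d M₂ ⊤ = dim.d M₁ ⊤ + dim.d M₃ ⊤) :
    (∀ (M : Type u) [AddCommGroup M] [Module R M] (N : Submodule R M),
        dim.d M N = dim.d ↥N ⊤) ∧
      IsNormalizedLengthFunction R (fun M _ _ => dim.d M ⊤) := by
  have part1 : ∀ (M : Type u) [AddCommGroup M] [Module R M] (N : Submodule R M),
      dim.d M N = dim.d ↥N ⊤ := fun M _ _ N => BivariantSylvesterRankAux.d_eq dim h M N
  refine ⟨part1, ?_⟩
  unfold IsNormalizedLengthFunction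
  refine ⟨dim.d_zero, dim.d_ring, ?_, ?_⟩
  · intro M _ _
    show dim.d M ⊤ = ⨆ p : {p : Submodule R M // p.FG}, dim.d ↥p.1 ⊤
    rw [dim.continuity_sup M ⊤]
    apply le_antisymm
    · refine iSup_le ?_
      rintro ⟨p, hp, -⟩
      exact le_iSup_of_le ⟨p, hp⟩ (part1 M p).le
    · refine iSup_le ?_
      rintro ⟨p, hp⟩
      exact le_iSup_of_le (⟨p, hp, le_top⟩ : {p' : Submodule R M // p'.FG ∧ p' ≤ ⊤})
        (part1 M p).ge
  · intro M₁ M₂ M₃ _ _ _ _ _ _ f g hf hfg hg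
    show dim.d M₂ ⊤ = dim.d M₁ ⊤ + dim.d M₃ ⊤
    have hker : LinearMap.ker g = LinearMap.range f := LinearMap.exact_iff.mp hfg
    have e3 : (M₂ ⧸ LinearMap.range f) ≃ₗ[R] M₃ := by
      rw [← hker]; exact g.quotKerEquivOfSurjective hg
    have e1 : M₁ ≃ₗ[R] ↥(LinearMap.range f) := LinearEquiv.ofInjective f hf
    calc dim.d M₂ ⊤ = dim.d M₂ (LinearMap.range f) + dim.d (M₂ ⧸ LinearMap.range f) ⊤ :=
          dim.additivity M₂ (LinearMap.range f)
      _ = dim.d M₁ ⊤ + dim.d M₃ ⊤ := by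
          rw [part1 M₂ (LinearMap.range f),
            ← BivariantSylvesterRankAux.d_top_congr dim M₁ _ e1,
            BivariantSylvesterRankAux.d_top_congr dim _ M₃ e3]
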